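/- Let α₀ > 0, β > 0 and Re > 0 be constants and set A₀ := α₀/β. Suppose H₀, H₁, F : [0,∞) → ℝ are continuous and nonnegative, H₀ is differentiable, F(t) ≥ H₀(t)² for all t ≥ 0, and the energy inequality (1/2)·H₀'(t) + Re⁻¹·H₁(t) + β·F(t) ≤ α₀·H₀(t) holds for all t ≥ 0. Then for every T > 0 the time average of F satisfies ⟨F⟩_T ≤ A₀·( A₀ + √(H₀(0)/(2βT)) ) + H₀(0)/(2βT). -/

import Mathlib

/-- Under the Leray-type energy inequality
`(1/2)·H₀' + Re⁻¹·H₁ + β·F ≤ α₀·H₀` with `F ≥ H₀²`, the time average of the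
quartic integral satisfies
`⟨F⟩_T ≤ A₀·(A₀ + √(H₀(0)/(2βT))) + H₀(0)/(2βT)` for every `T > 0`,
where `A₀ = α₀/β`. -/
theorem toner_tu_time_averaged_quartic (α₀ β Re : ℝ)
    (hα : 0 < α₀) (hβ : 0 < β) (hRe : 0 < Re)
    (H₀ H₀' H₁ F : ℝ → ℝ)
    (hH₀c : ContinuousOn H₀ (Set.Ici (0:ℝ)))
    (hH₁c : ContinuousOn H₁ (Set.Ici (0:ℝ)))
    (hFc : ContinuousOn F (Set.Ici (0:ℝ)))
    (hderiv : ∀ t ≥ (0:ℝ), HasDerivAt H₀ (H₀' t) t)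
    (hH₀nn : ∀ t ≥ (0:ℝ), 0 ≤ H₀ t)
    (hH₁nn : ∀ t ≥ (0:ℝ), 0 ≤ H₁ t)
    (hFnn : ∀ t ≥ (0:ℝ), 0 ≤ F t)
    (hFH₀ : ∀ t ≥ (0:ℝ), (H₀ t)^2 ≤ F t)
    (hineq : ∀ t ≥ (0:ℝ), (1/2) * H₀' t + Re⁻¹ * H₁ t + β * F t ≤ α₀ * H₀ t)
    (T : ℝ) (hT : 0 < T) :
    (1/T) * ∫ τ in (0:ℝ)..T, F τ ≤
      (α₀ / β) * (α₀ / β + Real.sqrt (H₀ 0 / (2 * β * T))) + H₀ 0 / (2 * β * T) := by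
  have hTle : (0:ℝ) ≤ T := hT.le
  have huIcc : Set.uIcc (0:ℝ) T = Set.Icc 0 T := Set.uIcc_of_le hTle
  have hsub : Set.Icc (0:ℝ) T ⊆ Set.Ici (0:ℝ) := fun x hx => hx.1
  -- integrability
  have hH₀i : IntervalIntegrable H₀ MeasureTheory.volume 0 T :=
    (hH₀c.mono (huIcc ▸ hsub)).intervalIntegrable
  have hFi : IntervalIntegrable F MeasureTheory.volume 0 T :=
    (hFc.mono (huIcc ▸ hsub)).intervalIntegrable
  have hH₀sqc : ContinuousOn (fun t => (H₀ t)^2) (Set.Ici (0:ℝ)) := hH₀c.pow 2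
  have hH₀sqi : IntervalIntegrable (fun t => (H₀ t)^2) MeasureTheory.volume 0 T :=
    (hH₀sqc.mono (huIcc ▸ hsub)).intervalIntegrable
  set J := ∫ τ in (0:ℝ)..T, H₀ τ with hJ
  set I := ∫ τ in (0:ℝ)..T, F τ with hI
  set K := ∫ τ in (0:ℝ)..T, (H₀ τ)^2 with hK
  have hJnn : 0 ≤ J := by
    apply intervalIntegral.integral_nonneg hTle
    intro u hu; exact hH₀nn u hu.1
  have hKI : K ≤ I := by
    apply intervalIntegral.integral_mono_on hTle hH₀sqi hFi
    intro u hu; exact hFH₀ u hu.1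
  -- Cauchy-Schwarz: J^2 ≤ T * K
  have hCS : J^2 ≤ T * K := by
    have h0 : (0:ℝ) ≤ ∫ τ in (0:ℝ)..T, (H₀ τ - J/T)^2 := by
      apply intervalIntegral.integral_nonneg hTle
      intro u _; positivity
    have hexp : ∀ τ : ℝ, (H₀ τ - J/T)^2 = (H₀ τ)^2 - (2*(J/T)) * H₀ τ + (J/T)^2 := by
      intro τ; ring
    have hint : (∫ τ in (0:ℝ)..T, (H₀ τ - J/T)^2)
        = K - (2*(J/T)) * J + (J/T)^2 * T := by
      simp_rw [hexp]
      rw [intervalIntegral.integral_add (hH₀sqi.sub (hH₀i.const_mul _))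
        intervalIntegrable_const,
        intervalIntegral.integral_sub hH₀sqi (hH₀i.const_mul _),
        intervalIntegral.integral_const_mul, intervalIntegral.integral_const]
      simp [hK, hJ, smul_eq_mul, mul_comm]
    rw [hint] at h0
    have hT' : T ≠ 0 := ne_of_gt hT
    have h1 : (K - 2*(J/T)*J + (J/T)^2*T) * T = K*T - J^2 := by
      field_simp; ring
    nlinarith [mul_nonneg h0 hTle, h1]
  -- energy step: 2*β*I ≤ 2*α₀*J + H₀ 0
  have henergy : 2*β*I ≤ 2*α₀*J + H₀ 0 := by
    set φ : ℝ → ℝ := fun t => ∫ τ in (0:ℝ)..t, (2*α₀*H₀ τ - 2*β*F τ) with hφ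
    set g : ℝ → ℝ := fun t => H₀ t - φ t with hg
    have hGc : ContinuousOn (fun τ => 2*α₀*H₀ τ - 2*β*F τ) (Set.Ici (0:ℝ)) :=
      (continuousOn_const.mul hH₀c).sub (continuousOn_const.mul hFc)
    have hGcIcc : ContinuousOn (fun τ => 2*α₀*H₀ τ - 2*β*F τ) (Set.Icc (0:ℝ) T) :=
      hGc.mono hsub
    have hGIi : IntervalIntegrable (fun τ => 2*α₀*H₀ τ - 2*β*F τ) MeasureTheory.volume 0 T :=
      (hGc.mono (huIcc ▸ hsub)).intervalIntegrable
    have hφc : ContinuousOn φ (Set.Icc 0 T) :=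
      huIcc ▸ intervalIntegral.continuousOn_primitive_interval' hGIi Set.left_mem_uIcc
    have hgc : ContinuousOn g (Set.Icc 0 T) :=
      ((hH₀c.mono hsub).sub hφc)
    have hanti : AntitoneOn g (Set.Icc 0 T) := by
      apply antitoneOn_of_deriv_nonpos (convex_Icc 0 T) hgc
      · intro x hx
        rw [interior_Icc] at hx
        have hx0 : (0:ℝ) < x := hx.1
        have hGca : ContinuousAt (fun τ => 2*α₀*H₀ τ - 2*β*F τ) x :=
          hGc.continuousAt (Ici_mem_nhds hx0)
        have hGint : IntervalIntegrable (fun τ => 2*α₀*H₀ τ - 2*β*F τ)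
            MeasureTheory.volume 0 x :=
          (hGc.mono (by rw [Set.uIcc_of_le hx0.le]; exact fun y hy => hy.1)).intervalIntegrable
        have hφd : HasDerivAt φ (2*α₀*H₀ x - 2*β*F x) x :=
          intervalIntegral.integral_hasDerivAt_right hGint
            ((hGc.mono Set.Ioi_subset_Ici_self).stronglyMeasurableAtFilter isOpen_Ioi x hx0) hGca
        have hgd : HasDerivAt g (H₀' x - (2*α₀*H₀ x - 2*β*F x)) x :=
          (hderiv x hx0.le).sub hφd
        exact (hgd.differentiableAt.differentiableWithinAt)
      · intro x hx
        rw [interior_Icc] at hx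
        have hx0 : (0:ℝ) < x := hx.1
        have hGca : ContinuousAt (fun τ => 2*α₀*H₀ τ - 2*β*F τ) x :=
          hGc.continuousAt (Ici_mem_nhds hx0)
        have hGint : IntervalIntegrable (fun τ => 2*α₀*H₀ τ - 2*β*F τ)
            MeasureTheory.volume 0 x :=
          (hGc.mono (by rw [Set.uIcc_of_le hx0.le]; exact fun y hy => hy.1)).intervalIntegrable
        have hφd : HasDerivAt φ (2*α₀*H₀ x - 2*β*F x) x :=
          intervalIntegral.integral_hasDerivAt_right hGint
            ((hGc.mono Set.Ioi_subset_Ici_self).stronglyMeasurableAtFilter isOpen_Ioi x hx0) hGca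
        have hgd : HasDerivAt g (H₀' x - (2*α₀*H₀ x - 2*β*F x)) x :=
          (hderiv x hx0.le).sub hφd
        rw [hgd.deriv]
        have h1 := hineq x hx0.le
        have h2 : 0 ≤ Re⁻¹ * H₁ x :=
          mul_nonneg (inv_nonneg.mpr hRe.le) (hH₁nn x hx0.le)
        nlinarith
    have hgT : g T ≤ g 0 :=
      hanti (Set.left_mem_Icc.mpr hTle) (Set.right_mem_Icc.mpr hTle) hTle
    have hg0 : g 0 = H₀ 0 := by simp [hg, hφ]
    have hφT : φ T = 2*α₀*J - 2*β*I := by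
      rw [hφ]
      simp only
      rw [intervalIntegral.integral_sub ((hH₀i.const_mul _)) ((hFi.const_mul _)),
        intervalIntegral.integral_const_mul, intervalIntegral.integral_const_mul]
    have hH₀T : 0 ≤ H₀ T := hH₀nn T hTle
    rw [hg0] at hgT
    have : H₀ T - φ T ≤ H₀ 0 := hgT
    rw [hφT] at this
    linarith
  -- final algebra
  set c := H₀ 0 / (2 * β * T) with hc
  have hcnn : 0 ≤ c := by
    have := hH₀nn 0 le_rfl
    positivity
  set s := Real.sqrt c with hs
  have hsnn : 0 ≤ s := Real.sqrt_nonneg c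
  have hssq : s^2 = c := Real.sq_sqrt hcnn
  set x := J / T with hx
  set y := I / T with hy
  have hxnn : 0 ≤ x := div_nonneg hJnn hTle
  have hyx : y ≤ (α₀/β) * x + c := by
    have h2βT : (0:ℝ) < 2*β*T := by positivity
    have h1 : I / T ≤ (2*α₀*J + H₀ 0) / (2*β*T) := by
      rw [div_le_div_iff₀ hT h2βT]
      nlinarith [henergy, hTle]
    have h2 : (2*α₀*J + H₀ 0) / (2*β*T) = (α₀/β) * (J/T) + H₀ 0 / (2*β*T) := by
      field_simp
    rw [hy, hx, hc]
    rw [← h2]; exact h1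
  have hx2y : x^2 ≤ y := by
    rw [hx, hy, div_pow, div_le_div_iff₀ (by positivity) hT]
    calc J^2 * T ≤ (T * K) * T := by nlinarith [hCS]
      _ ≤ I * T^2 := by nlinarith [hKI]
  have hxbound : x ≤ α₀/β + s := by
    by_contra h
    push_neg at h
    have hA : 0 < α₀/β := div_pos hα hβ
    nlinarith [hx2y, hyx, hssq, hsnn, hxnn]
  have hfin : y ≤ (α₀/β) * (α₀/β + s) + c := by
    have hA : 0 < α₀/β := div_pos hα hβ
    have := mul_le_mul_of_nonneg_left hxbound hA.le
    linarith
  calc (1/T) * I = y := by rw [hy]; ring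
    _ ≤ _ := hfin
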